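/- arXiv:2605.19353 — 5 statements merged into one kernel-verified Lean document; each statement's English description precedes it below -/
import Mathlib

section
/- Let d, x, y be positive integers with x^2 - 4*d*y^2 = 1. Then gcd((x+1)/2, y) * gcd((x+1)/2, d*y) = (x+1)/2, and likewise gcd((x-1)/2, y) * gcd((x-1)/2, d*y) = (x-1)/2. -/
theorem aux_gcd (a b d y : ℕ) (hab : a * b = d * y ^ 2) (hco : Nat.Coprime a b) :
    Nat.gcd a y * Nat.gcd a (d * y) = a := by
  apply Nat.dvd_antisymm
  · have h1 : Nat.gcd a y * Nat.gcd a (d * y) ∣ a * b := by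
      rw [hab, show d * y ^ 2 = y * (d * y) by ring]
      exact mul_dvd_mul (Nat.gcd_dvd_right a y) (Nat.gcd_dvd_right a (d * y))
    have h2 : Nat.Coprime (Nat.gcd a y * Nat.gcd a (d * y)) b :=
      Nat.Coprime.mul (Nat.Coprime.coprime_dvd_left (Nat.gcd_dvd_left a y) hco)
        (Nat.Coprime.coprime_dvd_left (Nat.gcd_dvd_left a (d * y)) hco)
    exact Nat.Coprime.dvd_of_dvd_mul_right h2 h1
  · have h3 : a ∣ y * (d * y) := by
      rw [show y * (d * y) = d * y ^ 2 by ring, ← hab]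
      exact Dvd.intro b rfl
    calc a = Nat.gcd a (y * (d * y)) := (Nat.gcd_eq_left h3).symm
      _ ∣ _ := Nat.gcd_mul_right_dvd_mul_gcd a y (d * y)

theorem stmt_2 (d x y : ℕ) (hd : 0 < d) (hx : 0 < x) (hy : 0 < y)
    (h : x ^ 2 = 4 * d * y ^ 2 + 1) :
    Nat.gcd ((x + 1) / 2) y * Nat.gcd ((x + 1) / 2) (d * y) = (x + 1) / 2 ∧
    Nat.gcd ((x - 1) / 2) y * Nat.gcd ((x - 1) / 2) (d * y) = (x - 1) / 2 := by
  have hodd : Odd x := by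
    rcases Nat.even_or_odd x with he | ho
    · exfalso
      obtain ⟨m, hm⟩ := he
      subst hm
      rw [show (m + m) ^ 2 = 4 * (m * m) by ring,
        show 4 * d * y ^ 2 = 4 * (d * y ^ 2) by ring] at h
      obtain ⟨A, hA⟩ : ∃ A, m * m = A := ⟨_, rfl⟩
      obtain ⟨B, hB⟩ : ∃ B, d * y ^ 2 = B := ⟨_, rfl⟩
      rw [hA, hB] at h
      omega
    · exact ho
  obtain ⟨k, hk⟩ := hodd
  have h1 : (x + 1) / 2 = k + 1 := by omega
  have h2 : (x - 1) / 2 = k := by omega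
  have hkey : (k + 1) * k = d * y ^ 2 := by nlinarith [sq_nonneg x]
  rw [h1, h2]
  have hc : Nat.Coprime (k + 1) k := by
    rw [Nat.Coprime, Nat.add_comm, Nat.gcd_add_self_left, Nat.gcd_one_left]
  exact ⟨aux_gcd (k + 1) k d y hkey hc,
    aux_gcd k (k + 1) d y (by linarith [hkey]) hc.symm⟩
end

section
/- Let d, x, y be positive integers with x^2 - 4*d*y^2 = 1. In the finite abelian group G = ℤ/yℤ ⊕ ℤ/(dy)ℤ, the number of elements z with ((x+1)/2) • z = 0 equals (x+1)/2, and the number of elements z with ((x-1)/2) • z = 0 equals (x-1)/2. -/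
theorem gcd_split (a b d y : ℕ) (hy : 0 < y) (hab : Nat.Coprime a b)
    (h : a * b = d * y ^ 2) : Nat.gcd a y * Nat.gcd a (d * y) = a := by
  set g := Nat.gcd a y with hg
  have hgpos : 0 < g := Nat.gcd_pos_of_pos_right a hy
  obtain ⟨a₁, ha⟩ : g ∣ a := Nat.gcd_dvd_left a y
  obtain ⟨y₁, hy1⟩ : g ∣ y := Nat.gcd_dvd_right a y
  -- forward: a ∣ g * gcd a (d*y)
  have hcop : Nat.Coprime a₁ y₁ := by
    have h1 := Nat.coprime_div_gcd_div_gcd (m := a) (n := y) hgpos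
    have e1 : a / g = a₁ := by rw [ha]; exact Nat.mul_div_cancel_left _ hgpos
    have e2 : y / g = y₁ := by rw [hy1]; exact Nat.mul_div_cancel_left _ hgpos
    rwa [e1, e2] at h1
  have key : a₁ * b = d * g * y₁ ^ 2 := by
    have : g * (a₁ * b) = g * (d * g * y₁ ^ 2) := by
      rw [← mul_assoc, ← ha]; rw [hy1] at h; ring_nf; ring_nf at h; linarith [h]
    exact Nat.eq_of_mul_eq_mul_left hgpos this
  have ha1dg : a₁ ∣ d * g := by
    have h1 : a₁ ∣ d * g * y₁ ^ 2 := ⟨b, key.symm⟩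
    exact (Nat.Coprime.pow_right 2 hcop).dvd_of_dvd_mul_right h1
  have ha1dy : a₁ ∣ d * y := by
    rw [hy1, ← mul_assoc]; exact ha1dg.mul_right y₁
  have hfwd : a ∣ g * Nat.gcd a (d * y) := by
    have ha1a : a₁ ∣ a := ha ▸ Dvd.intro_left g rfl
    have h6 := Nat.mul_dvd_mul_left g (Nat.dvd_gcd ha1a ha1dy)
    rwa [← ha] at h6
  -- backward: g * gcd a (d*y) ∣ a
  have hbwd : g * Nat.gcd a (d * y) ∣ a := by
    have h1 : g * Nat.gcd a (d * y) ∣ a * a :=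
      Nat.mul_dvd_mul (Nat.gcd_dvd_left a y) (Nat.gcd_dvd_left a (d * y))
    have h2 : g * Nat.gcd a (d * y) ∣ a * b := by
      have : g * Nat.gcd a (d * y) ∣ y * (d * y) :=
        Nat.mul_dvd_mul (Nat.gcd_dvd_right a y) (Nat.gcd_dvd_right a (d * y))
      rw [h]; rw [show y * (d * y) = d * y ^ 2 by ring] at this; exact this
    have h3 : g * Nat.gcd a (d * y) ∣ Nat.gcd (a * a) (a * b) := Nat.dvd_gcd h1 h2
    rwa [Nat.gcd_mul_left, hab, mul_one] at h3
  exact Nat.dvd_antisymm hbwd hfwd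

theorem card_ker_smul (n k : ℕ) (hn : 0 < n) :
    Nat.card {z : ZMod n // k • z = 0} = Nat.gcd k n := by
  haveI : NeZero n := ⟨hn.ne'⟩
  set f : ZMod n →+ ZMod n := AddMonoidHom.mulLeft (k : ZMod n) with hf
  have hker : ∀ z : ZMod n, k • z = 0 ↔ z ∈ f.ker := by
    intro z
    simp [hf, AddMonoidHom.mem_ker, nsmul_eq_mul]
  have e1 : Nat.card {z : ZMod n // k • z = 0} = Nat.card f.ker :=
    Nat.card_congr (Equiv.subtypeEquivRight hker)
  have h2 : Nat.card (ZMod n) = Nat.card (ZMod n ⧸ f.ker) * Nat.card f.ker :=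
    AddSubgroup.card_eq_card_quotient_mul_card_addSubgroup _
  have h3 : Nat.card (ZMod n ⧸ f.ker) = Nat.card f.range :=
    Nat.card_congr (QuotientAddGroup.quotientKerEquivRange f).toEquiv
  have h4 : f.range = AddSubgroup.zmultiples (k : ZMod n) := by
    ext z
    constructor
    · rintro ⟨x, rfl⟩
      exact ⟨(x.val : ℤ), by simp [hf, mul_comm, zsmul_eq_mul]⟩
    · rintro ⟨m, rfl⟩
      exact ⟨(m : ZMod n), by simp [hf, mul_comm, zsmul_eq_mul]⟩
  have h5 : Nat.card f.range = n / Nat.gcd n k := by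
    rw [h4, Nat.card_zmultiples, ZMod.addOrderOf_coe k hn.ne']
  have hcard : Nat.card (ZMod n) = n := Nat.card_zmod n
  have hdvd : Nat.gcd n k ∣ n := Nat.gcd_dvd_left n k
  have hgpos : 0 < Nat.gcd n k := Nat.gcd_pos_of_pos_left k hn
  rw [e1]
  rw [hcard, h3, h5] at h2
  have : n / Nat.gcd n k * Nat.gcd n k = n := Nat.div_mul_cancel hdvd
  have hq : 0 < n / Nat.gcd n k := Nat.div_pos (Nat.le_of_dvd hn hdvd) hgpos
  rw [Nat.gcd_comm]
  exact Nat.eq_of_mul_eq_mul_left hq (by omega)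

theorem card_ker_smul_prod (n₁ n₂ k : ℕ) (h1 : 0 < n₁) (h2 : 0 < n₂) :
    Nat.card {z : ZMod n₁ × ZMod n₂ // k • z = 0} = Nat.gcd k n₁ * Nat.gcd k n₂ := by
  have e : {z : ZMod n₁ × ZMod n₂ // k • z = 0} ≃
      {a : ZMod n₁ // k • a = 0} × {b : ZMod n₂ // k • b = 0} := by
    refine (Equiv.subtypeEquivRight ?_).trans (Equiv.subtypeProdEquivProd)
    intro z
    simp [Prod.ext_iff]
  rw [Nat.card_congr e, Nat.card_prod, card_ker_smul n₁ k h1, card_ker_smul n₂ k h2]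

theorem stmt_3 (d x y : ℕ) (hd : 0 < d) (hx : 0 < x) (hy : 0 < y)
    (h : x ^ 2 = 4 * d * y ^ 2 + 1) :
    Nat.card {z : ZMod y × ZMod (d * y) // ((x + 1) / 2) • z = 0} = (x + 1) / 2 ∧
    Nat.card {z : ZMod y × ZMod (d * y) // ((x - 1) / 2) • z = 0} = (x - 1) / 2 := by
  obtain ⟨m, hm⟩ : Odd x := by
    rcases Nat.even_or_odd x with he | ho
    · exfalso
      obtain ⟨t, ht⟩ := he
      subst ht
      have h4 : (t + t) ^ 2 = 4 * (t * t) := by ring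
      rw [h4] at h
      set A := t * t
      have h5 : 4 * d * y ^ 2 = 4 * (d * y ^ 2) := by ring
      rw [h5] at h
      set B := d * y ^ 2
      omega
    · exact ho
  subst hm
  have hprod : (m + 1) * m = d * y ^ 2 := by
    have h4 : 4 * ((m + 1) * m) + 1 = 4 * (d * y ^ 2) + 1 := by
      ring_nf
      ring_nf at h
      linarith
    omega
  have hdy : 0 < d * y := Nat.mul_pos hd hy
  have e1 : (2 * m + 1 + 1) / 2 = m + 1 := by omega
  have e2 : (2 * m + 1 - 1) / 2 = m := by omega
  rw [e1, e2, card_ker_smul_prod y (d * y) (m + 1) hy hdy,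
    card_ker_smul_prod y (d * y) m hy hdy]
  have hc : Nat.Coprime (m + 1) m := by simpa using Nat.coprime_self_add_left.mpr (Nat.coprime_one_left m)
  constructor
  · exact gcd_split (m + 1) m d y hy hc hprod
  · exact gcd_split m (m + 1) d y hy hc.symm (by rw [mul_comm]; exact hprod)
end

section
/- Let m, k be positive integers such that 4*k - 1 divides 2*m + 1, set s = (2*m+1)/(4*k-1) and d = m^2 + m + k. Then (x, y) = (2*(2*m+1)*s + 1, 2*s) satisfies x^2 - 4*d*y^2 = 1. -/
theorem stmt_7 (m k : ℕ) (hm : 0 < m) (hk : 0 < k)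
    (hdvd : 4 * k - 1 ∣ 2 * m + 1) :
    (2 * (2 * m + 1) * ((2 * m + 1) / (4 * k - 1)) + 1) ^ 2 =
      4 * (m ^ 2 + m + k) * (2 * ((2 * m + 1) / (4 * k - 1))) ^ 2 + 1 := by
  obtain ⟨s, hs⟩ := hdvd
  have hpos : 0 < 4 * k - 1 := by omega
  have hkey : 4 * (m ^ 2 + m + k) = (2 * m + 1) ^ 2 + (4 * k - 1) := by
    have : (2 * m + 1) ^ 2 = 4 * m ^ 2 + 4 * m + 1 := by ring
    omega
  rw [hs, Nat.mul_div_cancel_left s hpos, hkey, hs]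
  ring
end

section
/- Let m, k be positive integers such that 4*k + 1 divides 2*m - 1, set s = (2*m-1)/(4*k+1) and d = m^2 - m - k, and assume d ≥ 1. Then (x, y) = (2*(2*m-1)*s - 1, 2*s) satisfies x^2 - 4*d*y^2 = 1. -/
theorem stmt_8 (m k : ℕ) (hm : 0 < m) (hk : 0 < k)
    (hdvd : 4 * k + 1 ∣ 2 * m - 1) (hd : 1 ≤ m ^ 2 - m - k) :
    (2 * (2 * m - 1) * ((2 * m - 1) / (4 * k + 1)) - 1) ^ 2 =
      4 * (m ^ 2 - m - k) * (2 * ((2 * m - 1) / (4 * k + 1))) ^ 2 + 1 := by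
  obtain ⟨s, hs⟩ := hdvd
  have hdiv : (2 * m - 1) / (4 * k + 1) = s := by
    rw [hs, Nat.mul_div_cancel_left _ (by positivity)]
  rw [hdiv]
  set a := 2 * m - 1 with ha
  set d := m ^ 2 - m - k with hdd
  have ha1 : a + 1 = 2 * m := by omega
  have hdm : m ^ 2 = d + m + k := by omega
  -- a^2 = 4d + 4k + 1
  have hsq : (a + 1) ^ 2 = 4 * m ^ 2 := by rw [ha1]; ring
  have ha2 : a ^ 2 = 4 * d + 4 * k + 1 := by nlinarith [hsq, hdm]
  have hs1 : 1 ≤ s := by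
    rcases Nat.eq_zero_or_pos s with h | h
    · rw [h, Nat.mul_zero] at hs; omega
    · exact h
  have h1 : 1 ≤ 2 * a * s := by
    have : 1 ≤ a := by omega
    calc 1 = 1 * 1 := by norm_num
    _ ≤ 2 * a * s := Nat.mul_le_mul (by omega) hs1
  zify [h1]
  have has' : (a : ℤ) = (4 * k + 1) * s := by exact_mod_cast hs
  have ha2' : (a : ℤ) ^ 2 = 4 * d + 4 * k + 1 := by exact_mod_cast ha2
  linear_combination (4 * (s:ℤ)^2) * ha2' - 4 * (s:ℤ) * has'
end

section
/- Let d, x, y be positive integers with x^2 - 4*d*y^2 = 1 and x ≥ 3. Set A = gcd((x+1)/2, d) and B = gcd((x-1)/2, d). Then A * B = d. -/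
theorem stmt_11 (d x y : ℕ) (hd : 0 < d) (hx : 3 ≤ x) (hy : 0 < y)
    (h : x ^ 2 = 4 * d * y ^ 2 + 1) :
    Nat.gcd ((x + 1) / 2) d * Nat.gcd ((x - 1) / 2) d = d := by
  obtain ⟨k, hk⟩ : ∃ k, x = 2 * k + 1 := by
    rcases Nat.even_or_odd x with ⟨m, hm⟩ | ⟨m, hm⟩
    · exfalso; subst hm; ring_nf at h; omega
    · exact ⟨m, by omega⟩
  subst hk
  have h1 : (2 * k + 1 + 1) / 2 = k + 1 := by omega
  have h2 : (2 * k + 1 - 1) / 2 = k := by omega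
  rw [h1, h2]
  have hprod : (k + 1) * k = d * y ^ 2 := by nlinarith
  have hcop : Nat.Coprime (k + 1) k := by simpa using Nat.coprime_succ_self_right (n := k).symm
  have := Nat.Coprime.gcd_mul d hcop
  rw [Nat.gcd_comm (k+1) d, Nat.gcd_comm k d, ← this, hprod]
  have : d ∣ d * y ^ 2 := ⟨y ^ 2, rfl⟩
  exact Nat.gcd_eq_left this
end
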